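/- The map F ↦ F̄ from faces of the reduced no broken circuit complex to facets of the extended no broken circuit complex is injective; in particular, the number of facets of Δ^ENBC_{M,≺} equals the total number of faces of Δ^RNBC_M. -/

import Mathlib

open Set

/-- A circuit of a matroid: a minimal dependent set. -/
def Matroid.IsCircuit' {α : Type*} (M : Matroid α) (C : Set α) : Prop :=
  M.Dep C ∧ ∀ D ⊂ C, M.Indep D

/-- A broken circuit: a circuit with its least element (in the natural order) removed. -/
def Matroid.IsBrokenCircuit {n : ℕ} (M : Matroid (Fin (n + 1))) (B : Set (Fin (n + 1))) : Prop :=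
  ∃ C m, M.IsCircuit' C ∧ m ∈ C ∧ (∀ k ∈ C, m ≤ k) ∧ B = C \ {m}

/-- The rank of a set in a matroid: the largest size of an independent subset. -/
noncomputable def Matroid.rk' {α : Type*} (M : Matroid α) (S : Set α) : ℕ :=
  sSup {k | ∃ I, I ⊆ S ∧ M.Indep I ∧ I.ncard = k}

/-- A face of the reduced no broken circuit complex: a subset of `{1,…,n}` containing
no broken circuit (such a set is automatically independent). -/
def RNBCface {n : ℕ} (M : Matroid (Fin (n + 1))) (F : Set (Fin (n + 1))) : Prop :=
  (0 : Fin (n + 1)) ∉ F ∧ (∀ B, M.IsBrokenCircuit B → ¬ B ⊆ F) ∧ M.Indep F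

/-- The up-set `i↑` of `i` with respect to a second linear order `≺` (including `i` itself). -/
def upSet {n : ℕ} (prec : LinearOrder (Fin (n + 1))) (i : Fin (n + 1)) : Set (Fin (n + 1)) :=
  {j | prec.le i j}

/-- `L(F)`: the candidate `≺`-lexicographically maximal basis containing `F`, defined by
`i ∈ L(F)` iff `i ∈ F` or `rk(i↑ ∪ F) > rk((i↑ \ {i}) ∪ F)`. -/
noncomputable def LSet {n : ℕ} (M : Matroid (Fin (n + 1))) (prec : LinearOrder (Fin (n + 1)))
    (F : Set (Fin (n + 1))) : Set (Fin (n + 1)) :=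
  {i | i ∈ F ∨ M.rk' (upSet prec i ∪ F) > M.rk' ((upSet prec i \ {i}) ∪ F)}

/-- The facet `F̄` of the extended no broken circuit complex attached to a face `F` of the
reduced no broken circuit complex:  `{y_i : i ∈ F} ∪ {x_j : j ∈ L(F) \ F} ∪ {y_0}`,
with `x`-vertices encoded by `Sum.inl` and `y`-vertices by `Sum.inr`. -/
noncomputable def barFace {n : ℕ} (M : Matroid (Fin (n + 1))) (prec : LinearOrder (Fin (n + 1)))
    (F : Set (Fin (n + 1))) : Set (Fin (n + 1) ⊕ Fin (n + 1)) :=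
  (Sum.inr '' F) ∪ (Sum.inl '' (LSet M prec F \ F)) ∪ {Sum.inr 0}

/-- A face of the extended no broken circuit complex `Δ^ENBC_{M,≺}`: a subset of some
facet `F̄`. -/
noncomputable def ENBCface {n : ℕ} (M : Matroid (Fin (n + 1))) (prec : LinearOrder (Fin (n + 1)))
    (G : Set (Fin (n + 1) ⊕ Fin (n + 1))) : Prop :=
  ∃ F, RNBCface M F ∧ G ⊆ barFace M prec F

/-- the map `F ↦ F̄` from faces of the reduced no broken circuit complex to
facets of the extended no broken circuit complex is injective; in particular the number of
facets of `Δ^ENBC_{M,≺}` equals the number of faces of `Δ^RNBC_M`. -/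
theorem barFace_injective {n r : ℕ} (M : Matroid (Fin (n + 1)))
    (prec : LinearOrder (Fin (n + 1)))
    (hE : M.E = Set.univ)
    (hsimple : ∀ e f : Fin (n + 1), e ≠ f → M.Indep {e, f})
    (hloopless : ∀ e : Fin (n + 1), M.Indep {e})
    (hrank : ∀ B : Set (Fin (n + 1)), M.IsBase B → B.ncard = r + 1) :
    Set.InjOn (barFace M prec) {F | RNBCface M F} ∧
      (barFace M prec '' {F | RNBCface M F}).ncard = {F | RNBCface M F}.ncard := by
  have key : ∀ F : Set (Fin (n + 1)), RNBCface M F →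
      ∀ i : Fin (n + 1), i ∈ F ↔ (Sum.inr i ∈ barFace M prec F ∧ i ≠ 0) := by
    intro F hF i
    constructor
    · intro hi
      refine ⟨Or.inl (Or.inl ⟨i, hi, rfl⟩), ?_⟩
      rintro rfl; exact hF.1 hi
    · rintro ⟨hmem, hne⟩
      rcases hmem with (⟨j, hj, hji⟩ | ⟨j, _, hji⟩) | h
      · cases hji; exact hj
      · exact absurd hji (by simp)
      · exact absurd (Sum.inr.inj h.symm) (fun e => hne e.symm)
  have hinj : Set.InjOn (barFace M prec) {F | RNBCface M F} := by
    intro F1 h1 F2 h2 heq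
    ext i
    rw [key F1 h1 i, key F2 h2 i, heq]
  exact ⟨hinj, Set.ncard_image_of_injOn hinj⟩
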